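/- Let p be a point of the plane with p₂ ≥ 0, let t be a point on the x-axis, and let w be a point with dist(t,w) = dist(t,p) and w ≠ p' (where p' = (p₁,−p₂) is the mirror image of p across the x-axis). If either (w₁ ≤ p₁ and w₂ ≥ −p₂) or (w₁ ≥ p₁ and w₂ ≤ −p₂), then the cross product (p − t) × (w − t) = (p₁ − t₁)·w₂ − p₂·(w₁ − t₁) is nonnegative; equivalently, the counterclockwise angle swept from the ray from t through p to the ray from t through w lies in [0, π]. -/

import Mathlib

lemma cross_nonneg_aux (a b x y : ℝ) (hb : 0 ≤ b)
    (hd : x^2 + y^2 = a^2 + b^2)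
    (hne : x ≠ a ∨ y ≠ -b)
    (hreg : (x ≤ a ∧ -b ≤ y) ∨ (a ≤ x ∧ y ≤ -b)) :
    0 ≤ a*y - b*x := by
  have hs1 : 0 ≤ a^2 + b^2 + (a*x + b*y) := by nlinarith [sq_nonneg (a+x), sq_nonneg (b+y)]
  have hs2 : 0 ≤ a^2 + b^2 - (a*x + b*y) := by nlinarith [sq_nonneg (a-x), sq_nonneg (b-y)]
  have hkey : (a*y - b*x)*((y+b)+(a-x)) =
      (a-x)*((a^2+b^2)+(a*x+b*y)) + (y+b)*((a^2+b^2)-(a*x+b*y)) := by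
    linear_combination (a+b)*hd
  rcases hreg with ⟨h1', h2'⟩ | ⟨h1', h2'⟩ <;> rcases hne with hne | hne
  · have hxa : x < a := lt_of_le_of_ne h1' hne
    nlinarith [hkey, mul_nonneg hs1 (by linarith : (0:ℝ) ≤ a - x),
      mul_nonneg hs2 (by linarith : (0:ℝ) ≤ y + b)]
  · have hyb : -b < y := lt_of_le_of_ne h2' (Ne.symm hne)
    nlinarith [hkey, mul_nonneg hs1 (by linarith : (0:ℝ) ≤ a - x),
      mul_nonneg hs2 (by linarith : (0:ℝ) ≤ y + b)]
  · have hxa : a < x := lt_of_le_of_ne h1' (Ne.symm hne)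
    nlinarith [hkey, mul_nonneg hs1 (by linarith : (0:ℝ) ≤ x - a),
      mul_nonneg hs2 (by linarith : (0:ℝ) ≤ -(y+b))]
  · have hyb : y < -b := lt_of_le_of_ne h2' hne
    nlinarith [hkey, mul_nonneg hs1 (by linarith : (0:ℝ) ≤ x - a),
      mul_nonneg hs2 (by linarith : (0:ℝ) ≤ -(y+b))]

/-- Key claim (regions R₁ and R₄) in the proof of Theorem 4(ii): for `p` on or
above the x-axis, `t` on the x-axis, and `w` on the circle centered at `t`
through `p` with `w ≠ p'`, if `w` lies in region `R₁` or `R₄`, then the cross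
product `(p − t) × (w − t)` is nonnegative, i.e. the counterclockwise angle
from the ray `t→p` to the ray `t→w` lies in `[0, π]`. -/
theorem cross_nonneg_regions_R1_R4
    (p p' t w : EuclideanSpace ℝ (Fin 2))
    (hp : 0 ≤ p 1) (ht : t 1 = 0)
    (hw : dist t w = dist t p)
    (hp'0 : p' 0 = p 0) (hp'1 : p' 1 = -(p 1)) (hwp' : w ≠ p')
    (hreg : (w 0 ≤ p 0 ∧ -(p 1) ≤ w 1) ∨ (p 0 ≤ w 0 ∧ w 1 ≤ -(p 1))) :
    0 ≤ (p 0 - t 0) * w 1 - p 1 * (w 0 - t 0) := by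
  have h1 := EuclideanSpace.dist_eq t w
  have h2 := EuclideanSpace.dist_eq t p
  rw [hw, h2] at h1
  have hd : (t 0 - w 0)^2 + (t 1 - w 1)^2 = (t 0 - p 0)^2 + (t 1 - p 1)^2 := by
    have hs1 : (0:ℝ) ≤ ∑ i, dist (t i) (w i) ^ 2 :=
      Finset.sum_nonneg fun i _ => sq_nonneg _
    have hs2 : (0:ℝ) ≤ ∑ i, dist (t i) (p i) ^ 2 :=
      Finset.sum_nonneg fun i _ => sq_nonneg _
    have := (Real.sqrt_inj hs2 hs1).mp h1
    simp only [Fin.sum_univ_two, Real.dist_eq, sq_abs] at this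
    linarith
  rw [ht] at hd
  have hne : w 0 - t 0 ≠ p 0 - t 0 ∨ w 1 ≠ -(p 1) := by
    by_contra h
    push_neg at h
    apply hwp'
    ext i
    fin_cases i
    · show w 0 = p' 0
      rw [hp'0]; linarith [h.1]
    · show w 1 = p' 1
      rw [hp'1]; exact h.2
  exact cross_nonneg_aux (p 0 - t 0) (p 1) (w 0 - t 0) (w 1) hp
    (by nlinarith [hd]) hne
    (by rcases hreg with ⟨u, v⟩ | ⟨u, v⟩
        · exact Or.inl ⟨by linarith, v⟩
        · exact Or.inr ⟨by linarith, v⟩)
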